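/- For fixed x ∈ (1/2, 1), if k_p is a sequence of integers with k_p ~ x·p as p → ∞, then the transition probability b(p, k_p) := 2·Z(p - k_p + 1)·Z(k_p)/Z(p) satisfies b(p, k_p) ~ (2t/p^{5/2})·(x(1-x))^{-5/2} as p → ∞, where t = √3/(8√π). -/

import Mathlib

open Asymptotics Filter

/-- `Z(1) = (2-√3)/4` and `Z(p) = 6^p·(2p-5)!!/(8√3·p!)` for `p ≥ 2`. -/
noncomputable def Zfun : ℕ → ℝ := fun p =>
  if p = 1 then (2 - Real.sqrt 3) / 4
  else 6 ^ p * Nat.doubleFactorial (2 * p - 5) / (8 * Real.sqrt 3 * Nat.factorial p)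

open Real


noncomputable def stf : ℕ → ℝ := fun n => Real.sqrt (2*n*π) * ((n:ℝ) / Real.exp 1)^n
noncomputable def gf : ℕ → ℝ := fun n => 12^n / (32 * Real.sqrt 3 * Real.sqrt π * (n:ℝ)^((5:ℝ)/2))

lemma key_id (m : ℕ) (hm : 1 ≤ m) :
    (6^(m+2) * stf (2*m) / (2^m * (8*Real.sqrt 3) * (stf m * stf (m+2)))) / gf (m+2)
      = Real.exp 1 ^ 2 * ((m:ℝ)/((m:ℝ)+2))^m := by
  have hA : (0:ℝ) < m := by exact_mod_cast hm
  unfold stf gf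
  set E : ℝ := Real.exp 1 with hE
  have hepos : (0:ℝ) < E := Real.exp_pos 1
  set A : ℝ := (m:ℝ) with hAdef
  have hP : (0:ℝ) < A + 2 := by linarith
  have epi : Real.sqrt π * Real.sqrt π = π := Real.mul_self_sqrt pi_pos.le
  have eA : Real.sqrt A * Real.sqrt A = A := Real.mul_self_sqrt hA.le
  have eP : Real.sqrt (A+2) * Real.sqrt (A+2) = A+2 := Real.mul_self_sqrt hP.le
  have hsqrt1 : Real.sqrt (2*(2*A)*π) = 2*Real.sqrt A*Real.sqrt π := by
    rw [show 2*(2*A)*π = (2:ℝ)^2*(A*π) by ring, Real.sqrt_mul (by positivity),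
      Real.sqrt_sq (by norm_num), Real.sqrt_mul hA.le]
    ring
  have hpair : (Real.sqrt (2*(m:ℝ)*π) * ((m:ℝ)/E)^m) * (Real.sqrt (2*((m:ℕ)+2:ℕ)*π) * ((((m:ℕ)+2:ℕ):ℝ)/E)^(m+2)) =
      (2*Real.sqrt π*Real.sqrt π*Real.sqrt A*Real.sqrt (A+2)) *
        ((A^m/E^m) * ((A+2)^(m+2)/E^(m+2))) := by
    push_cast
    rw [mul_mul_mul_comm]
    congr 1
    · rw [← Real.sqrt_mul (by positivity)]
      rw [show 2*A*π*(2*(A+2)*π) = (2*Real.sqrt π*Real.sqrt π*Real.sqrt A*Real.sqrt (A+2))^2 by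
        calc 2*A*π*(2*(A+2)*π)
            = 2^2*(Real.sqrt π*Real.sqrt π)*(Real.sqrt π*Real.sqrt π)*(Real.sqrt A*Real.sqrt A)*
              (Real.sqrt (A+2)*Real.sqrt (A+2)) := by rw [epi, eA, eP]; ring
          _ = _ := by ring]
      exact Real.sqrt_sq (by positivity)
    · rw [div_pow, div_pow]
  have hst2 : Real.sqrt (2*((2*m:ℕ):ℝ)*π) * (((2*m:ℕ):ℝ)/E)^(2*m) =
      (2*Real.sqrt A*Real.sqrt π) * (2^(2*m) * A^(2*m) / E^(2*m)) := by
    push_cast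
    rw [hsqrt1, div_pow, mul_pow]
  have hP52 : ((((m:ℕ)+2:ℕ)):ℝ)^((5:ℝ)/2) = (A+2)^2 * Real.sqrt (A+2) := by
    push_cast
    rw [Real.sqrt_eq_rpow, ← Real.rpow_natCast (A+2) 2, ← Real.rpow_add hP]
    norm_num
    rfl
  have h12 : (12:ℝ)^(m+2) = 6^(m+2)*2^(m+2) := by rw [← mul_pow]; norm_num
  have hs3 : Real.sqrt 3 ≠ 0 := by positivity
  have hspi : Real.sqrt π ≠ 0 := by positivity
  have hsA : Real.sqrt A ≠ 0 := by positivity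
  have hsP : Real.sqrt (A+2) ≠ 0 := by positivity
  rw [hpair, hst2, hP52, h12]
  push_cast
  simp only [div_pow]
  field_simp
  ring

lemma fact_equiv : (fun n => (n.factorial : ℝ)) ~[atTop] stf :=
  Stirling.factorial_isEquivalent_stirling

lemma compt' {u v : ℕ → ℝ} (h : u ~[atTop] v) {c : ℕ → ℕ} (hc : Tendsto c atTop atTop) :
    (fun p => u (c p)) ~[atTop] fun p => v (c p) :=
  h.isLittleO.comp_tendsto hc

lemma phi_lim : Tendsto (fun p : ℕ => Real.exp 1 ^ 2 * (((p:ℝ)-2)/p)^(p-2)) atTop (nhds 1) := by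
  have hb : Tendsto (fun p : ℕ => 1 + (-2:ℝ)/p) atTop (nhds 1) := by
    have := tendsto_const_div_atTop_nhds_zero_nat (-2:ℝ)
    have h2 := this.const_add (1:ℝ)
    simpa using h2
  have h1 := Real.tendsto_one_add_div_pow_exp (-2:ℝ)
  have h2 : Tendsto (fun p : ℕ => ((1 + (-2:ℝ)/p)^2)⁻¹) atTop (nhds 1) := by
    have := (hb.pow 2).inv₀ (by norm_num)
    simpa using this
  have h3 : Tendsto (fun p : ℕ => Real.exp 1 ^ 2 * ((1 + (-2:ℝ)/p)^p) * ((1 + (-2:ℝ)/p)^2)⁻¹)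
      atTop (nhds (Real.exp 1 ^ 2 * Real.exp (-2) * 1)) :=
    ((tendsto_const_nhds.mul h1).mul h2)
  have hval : Real.exp 1 ^ 2 * Real.exp (-2) * 1 = 1 := by
    rw [mul_one, Real.exp_neg, show Real.exp 1 ^ 2 = Real.exp 2 by
      rw [← Real.exp_nat_mul]; norm_num]
    rw [mul_inv_cancel₀ (Real.exp_ne_zero 2)]
  rw [hval] at h3
  apply h3.congr'
  filter_upwards [eventually_ge_atTop 3] with p hp
  have hp0 : (0:ℝ) < p := by positivity
  have hp3 : (3:ℝ) ≤ p := by exact_mod_cast hp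
  have hbase : 1 + (-2:ℝ)/p = ((p:ℝ)-2)/p := by field_simp; ring
  have hbne : ((p:ℝ)-2)/p ≠ 0 := by
    apply div_ne_zero <;> intro h <;> nlinarith
  rw [hbase, pow_sub₀ _ hbne (by omega : 2 ≤ p)]
  ring

lemma df_key (n : ℕ) : (2*n).factorial = Nat.doubleFactorial (2*n-1) * (2^n * n.factorial) := by
  cases n with
  | zero => rfl
  | succ j =>
    have h2 : Nat.doubleFactorial (2*j+1+1) = 2^(j+1) * (j+1).factorial := by
      have := Nat.doubleFactorial_two_mul (j+1); rw [show 2*(j+1) = 2*j+1+1 by omega] at this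
      exact this
    have he : 2*(j+1) = 2*j+1+1 := by omega
    calc (2*(j+1)).factorial = (2*j+1+1).factorial := by rw [he]
      _ = Nat.doubleFactorial (2*j+1+1) * Nat.doubleFactorial (2*j+1) :=
          Nat.factorial_eq_mul_doubleFactorial (2*j+1)
      _ = Nat.doubleFactorial (2*(j+1)-1) * (2^(j+1) * (j+1).factorial) := by
          rw [h2, show 2*(j+1)-1 = 2*j+1 by omega]; ring

lemma Z_equiv : Zfun ~[atTop] gf := by
  -- Zfun is eventually equal to F
  have hZF : Zfun =ᶠ[atTop] (fun p => 6^p * (((2*(p-2)).factorial : ℝ)) /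
      ((2:ℝ)^(p-2) * (8*Real.sqrt 3) * ((((p-2).factorial : ℝ)) * ((p.factorial : ℝ))))) := by
    filter_upwards [eventually_ge_atTop 3] with p hp
    have hdf := df_key (p-2)
    rw [show 2*(p-2)-1 = 2*p-5 from by omega] at hdf
    have hcast : (((2*(p-2)).factorial : ℝ)) =
        (Nat.doubleFactorial (2*p-5) : ℝ) * (2^(p-2) * (((p-2).factorial : ℝ))) := by
      exact_mod_cast congrArg (Nat.cast : ℕ → ℝ) hdf
    rw [Zfun, if_neg (by omega : ¬ p = 1), hcast]
    have h1 : ((p-2).factorial : ℝ) ≠ 0 := by positivity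
    have h2 : ((p).factorial : ℝ) ≠ 0 := by positivity
    have h3 : Real.sqrt 3 ≠ 0 := by positivity
    have h4 : (2:ℝ)^(p-2) ≠ 0 := by positivity
    field_simp
  have t2m : Tendsto (fun p : ℕ => 2*(p-2)) atTop atTop :=
    tendsto_atTop_atTop.mpr (fun b => ⟨b + 2, fun a ha => by omega⟩)
  have tm : Tendsto (fun p : ℕ => p-2) atTop atTop :=
    tendsto_atTop_atTop.mpr (fun b => ⟨b + 2, fun a ha => by omega⟩)
  have hFG : (fun p => 6^p * (((2*(p-2)).factorial : ℝ)) /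
      ((2:ℝ)^(p-2) * (8*Real.sqrt 3) * ((((p-2).factorial : ℝ)) * ((p.factorial : ℝ))))) ~[atTop]
      (fun p => 6^p * stf (2*(p-2)) / ((2:ℝ)^(p-2) * (8*Real.sqrt 3) * (stf (p-2) * stf p))) := by
    exact ((IsEquivalent.refl (u := fun p : ℕ => (6:ℝ)^p)).mul (compt' fact_equiv t2m)).div
      ((IsEquivalent.refl (u := fun p : ℕ => (2:ℝ)^(p-2) * (8*Real.sqrt 3))).mul
        ((compt' fact_equiv tm).mul fact_equiv))
  have hGg : (fun p => 6^p * stf (2*(p-2)) / ((2:ℝ)^(p-2) * (8*Real.sqrt 3) * (stf (p-2) * stf p)))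
      ~[atTop] gf := by
    apply isEquivalent_of_tendsto_one
    · apply phi_lim.congr'
      filter_upwards [eventually_ge_atTop 3] with p hp
      obtain ⟨m, rfl⟩ : ∃ m, p = m + 2 := ⟨p - 2, by omega⟩
      have hm : 1 ≤ m := by omega
      have := key_id m hm
      rw [show m+2-2 = m from by omega]
      rw [show ((m+2:ℕ):ℝ) - 2 = (m:ℝ) from by push_cast; ring,
        show ((m+2:ℕ):ℝ) = (m:ℝ)+2 from by push_cast; ring]
      exact this.symm
  exact (hZF.trans_isEquivalent (hFG.trans hGg))

lemma rpow_equiv {u v : ℕ → ℝ} (hv : ∀ᶠ p in atTop, 0 < v p) (h : u ~[atTop] v) (c : ℝ) :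
    (fun p => u p ^ c) ~[atTop] fun p => v p ^ c := by
  have hv' : ∀ᶠ p in atTop, v p ≠ 0 := hv.mono fun p h => h.ne'
  have ht := (isEquivalent_iff_tendsto_one hv').mp h
  have hupos : ∀ᶠ p in atTop, 0 < u p := by
    filter_upwards [hv, ht.eventually (eventually_gt_nhds zero_lt_one)] with p h1 h2
    have h3 : (0:ℝ) < u p / v p := h2
    have := mul_pos h3 h1
    rwa [div_mul_cancel₀ _ h1.ne'] at this
  apply isEquivalent_of_tendsto_one
  · have : Tendsto (fun p => (u p / v p) ^ c) atTop (nhds ((1:ℝ)^c)) :=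
      ht.rpow_const (Or.inl one_ne_zero)
    rw [Real.one_rpow] at this
    apply this.congr'
    filter_upwards [hv, hupos] with p h1 h2
    rw [Real.div_rpow h2.le h1.le]
    rfl

/-- If `k_p ~ x·p` for a fixed `x ∈ (1/2,1)`, then the transition probability
`b(p,k_p) = 2·Z(p-k_p+1)·Z(k_p)/Z(p)` satisfies
`b(p,k_p) ~ (2t/p^{5/2})·(x(1-x))^{-5/2}` with `t = √3/(8√π)`. -/
theorem transition_asymptotic (x : ℝ) (hx : x ∈ Set.Ioo (1 / 2 : ℝ) 1) (k : ℕ → ℕ)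
    (hk : (fun p : ℕ => (k p : ℝ)) ~[atTop] (fun p : ℕ => x * (p : ℝ))) :
    (fun p : ℕ => 2 * Zfun (p - k p + 1) * Zfun (k p) / Zfun p) ~[atTop]
      (fun p : ℕ => 2 * (Real.sqrt 3 / (8 * Real.sqrt Real.pi)) / (p : ℝ) ^ ((5 : ℝ) / 2) *
        (x * (1 - x)) ^ (-(5 / 2) : ℝ)) := by
  obtain ⟨hx1, hx2⟩ := hx
  have hx0 : (0:ℝ) < x := by linarith
  have h1x : (0:ℝ) < 1 - x := by linarith
  set q : ℕ → ℕ := fun p => p - k p + 1 with hqdef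
  -- ratio tendsto facts
  have hxpne : ∀ᶠ p : ℕ in atTop, x * (p:ℝ) ≠ 0 := by
    filter_upwards [eventually_ge_atTop 1] with p hp
    have : (0:ℝ) < p := by positivity
    positivity
  have hkratio := (isEquivalent_iff_tendsto_one hxpne).mp hk
  have hkp : Tendsto (fun p : ℕ => (k p:ℝ)/p) atTop (nhds x) := by
    have h := hkratio.mul_const x
    rw [one_mul] at h
    apply h.congr'
    filter_upwards [eventually_ge_atTop 1] with p hp
    have hp0 : (0:ℝ) < p := by positivity
    simp only [Pi.div_apply]
    field_simp
  have hklt : ∀ᶠ p : ℕ in atTop, k p < p := by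
    have h := hkp.eventually_lt_const hx2
    filter_upwards [h, eventually_ge_atTop 1] with p h1 hp
    have hp0 : (0:ℝ) < p := by positivity
    by_contra hcon
    have : (p:ℝ) ≤ k p := by exact_mod_cast not_lt.mp hcon
    have : (1:ℝ) ≤ (k p:ℝ)/p := (one_le_div hp0).mpr this
    linarith
  have hktop : Tendsto k atTop atTop := by
    rw [← tendsto_natCast_atTop_iff (R := ℝ)]
    exact hk.symm.tendsto_atTop
      ((tendsto_natCast_atTop_atTop (R := ℝ)).const_mul_atTop hx0)
  -- q asymptotics
  have hnum : Tendsto (fun p : ℕ => (1 - (k p:ℝ)/p + 1/p)/(1-x)) atTop (nhds 1) := by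
    have h1 : Tendsto (fun p : ℕ => 1 - (k p:ℝ)/p + 1/p) atTop (nhds (1 - x + 0)) :=
      (tendsto_const_nhds.sub hkp).add tendsto_one_div_atTop_nhds_zero_nat
    have h2 := h1.div_const (1-x)
    rw [add_zero, div_self h1x.ne'] at h2
    exact h2
  have hqequiv : (fun p : ℕ => ((q p : ℕ):ℝ)) ~[atTop] (fun p : ℕ => (1-x) * (p:ℝ)) := by
    apply isEquivalent_of_tendsto_one
    · apply hnum.congr'
      filter_upwards [hklt, eventually_ge_atTop 1] with p h1 hp
      have hp0 : (0:ℝ) < p := by positivity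
      have hc : ((q p : ℕ):ℝ) = (p:ℝ) - k p + 1 := by
        simp only [hqdef]
        push_cast [Nat.le_of_lt h1]
        ring
      rw [Pi.div_apply, hc, div_eq_div_iff (by positivity) (by positivity)]
      field_simp
  have hqtop : Tendsto q atTop atTop := by
    rw [← tendsto_natCast_atTop_iff (R := ℝ)]
    exact hqequiv.symm.tendsto_atTop
      ((tendsto_natCast_atTop_atTop (R := ℝ)).const_mul_atTop h1x)
  -- compose Z_equiv
  have hZq := compt' Z_equiv hqtop
  have hZk := compt' Z_equiv hktop
  have hLH : (fun p : ℕ => 2 * Zfun (p - k p + 1) * Zfun (k p) / Zfun p) ~[atTop]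
      (fun p : ℕ => 2 * gf (q p) * gf (k p) / gf p) :=
    (((IsEquivalent.refl (u := fun _ : ℕ => (2:ℝ))).mul hZq).mul hZk).div Z_equiv
  -- H = H'
  have hHH' : (fun p : ℕ => 2 * gf (q p) * gf (k p) / gf p) =ᶠ[atTop]
      (fun p : ℕ => 24/(32*Real.sqrt 3*Real.sqrt π) * (p:ℝ)^((5:ℝ)/2) *
        (((q p:ℕ):ℝ)^((5:ℝ)/2))⁻¹ * (((k p:ℕ):ℝ)^((5:ℝ)/2))⁻¹) := by
    filter_upwards [hklt, hktop.eventually_ge_atTop 1, hqtop.eventually_ge_atTop 1,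
      eventually_ge_atTop 1] with p h1 h2 h3 h4
    have hqk : q p + k p = p + 1 := by simp only [hqdef]; omega
    have hp0 : (0:ℝ) < p := by positivity
    have hk0 : (0:ℝ) < (k p:ℝ) := by exact_mod_cast h2
    have hq0 : (0:ℝ) < ((q p:ℕ):ℝ) := by exact_mod_cast h3
    have hQp : (0:ℝ) < (p:ℝ)^((5:ℝ)/2) := Real.rpow_pos_of_pos hp0 _
    have hQq : (0:ℝ) < ((q p:ℕ):ℝ)^((5:ℝ)/2) := Real.rpow_pos_of_pos hq0 _
    have hQk : (0:ℝ) < ((k p:ℕ):ℝ)^((5:ℝ)/2) := Real.rpow_pos_of_pos hk0 _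
    have h12 : (12:ℝ)^(q p) = 12 * 12^p / 12^(k p) := by
      rw [eq_div_iff (by positivity), ← pow_add, hqk, pow_succ]
      ring
    unfold gf
    rw [h12]
    have hs3 : Real.sqrt 3 ≠ 0 := by positivity
    have hst : Real.sqrt π ≠ 0 := by positivity
    field_simp
    ring
  -- H' ~ R'
  have hposq : ∀ᶠ p : ℕ in atTop, (0:ℝ) < (1-x)*(p:ℝ) := by
    filter_upwards [eventually_ge_atTop 1] with p hp
    have hp0 : (0:ℝ) < p := by positivity
    positivity
  have hposk : ∀ᶠ p : ℕ in atTop, (0:ℝ) < x*(p:ℝ) := by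
    filter_upwards [eventually_ge_atTop 1] with p hp
    have hp0 : (0:ℝ) < p := by positivity
    positivity
  have e1 := (rpow_equiv hposq hqequiv ((5:ℝ)/2)).inv
  have e2 := (rpow_equiv hposk hk ((5:ℝ)/2)).inv
  have hH'R' : (fun p : ℕ => 24/(32*Real.sqrt 3*Real.sqrt π) * (p:ℝ)^((5:ℝ)/2) *
        (((q p:ℕ):ℝ)^((5:ℝ)/2))⁻¹ * (((k p:ℕ):ℝ)^((5:ℝ)/2))⁻¹) ~[atTop]
      (fun p : ℕ => 24/(32*Real.sqrt 3*Real.sqrt π) * (p:ℝ)^((5:ℝ)/2) *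
        ((((1-x)*(p:ℝ))^((5:ℝ)/2))⁻¹) * (((x*(p:ℝ))^((5:ℝ)/2))⁻¹)) :=
    ((IsEquivalent.refl (u := fun p : ℕ =>
      24/(32*Real.sqrt 3*Real.sqrt π) * (p:ℝ)^((5:ℝ)/2))).mul e1).mul e2
  -- R' = RHS
  have hR'RHS : (fun p : ℕ => 24/(32*Real.sqrt 3*Real.sqrt π) * (p:ℝ)^((5:ℝ)/2) *
        ((((1-x)*(p:ℝ))^((5:ℝ)/2))⁻¹) * (((x*(p:ℝ))^((5:ℝ)/2))⁻¹)) =ᶠ[atTop]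
      (fun p : ℕ => 2 * (Real.sqrt 3 / (8 * Real.sqrt Real.pi)) / (p : ℝ) ^ ((5 : ℝ) / 2) *
        (x * (1 - x)) ^ (-(5 / 2) : ℝ)) := by
    filter_upwards [eventually_ge_atTop 1] with p hp
    have hp0 : (0:ℝ) < p := by positivity
    rw [Real.mul_rpow h1x.le hp0.le, Real.mul_rpow hx0.le hp0.le,
      Real.rpow_neg (by positivity : (0:ℝ) ≤ x*(1-x)),
      Real.mul_rpow hx0.le h1x.le]
    have hQp : (0:ℝ) < (p:ℝ)^((5:ℝ)/2) := Real.rpow_pos_of_pos hp0 _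
    have hQ1 : (0:ℝ) < ((1-x):ℝ)^((5:ℝ)/2) := Real.rpow_pos_of_pos h1x _
    have hQ2 : (0:ℝ) < (x:ℝ)^((5:ℝ)/2) := Real.rpow_pos_of_pos hx0 _
    have hs3 : Real.sqrt 3 * Real.sqrt 3 = 3 := Real.mul_self_sqrt (by norm_num)
    have hs3' : Real.sqrt 3 ≠ 0 := by positivity
    have hst : Real.sqrt π ≠ 0 := by positivity
    field_simp
    linear_combination (-64) * hs3
  exact ((hLH.trans_eventuallyEq hHH').trans hH'R').trans_eventuallyEq hR'RHS
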